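/- Let s ≥ m be positive integers, and let S and X be independent ℕ-valued random variables such that: (1) S is unimodal with mode s and right-skewed, meaning P(S = s−i) ≤ P(S = s+i−1) for all 1 ≤ i ≤ s; (2) E(X) = m and the sequence α_i := P(X ≤ m−i) − P(X ≥ m+i), for 1 ≤ i ≤ m, changes sign at most once (there exists ℓ ∈ [m] with α_i ≥ 0 for i ≤ ℓ and α_i ≤ 0 for i > ℓ). Then P(S ≥ s) ≥ P(S + X ≥ s + m). -/

import Mathlib

open MeasureTheory Finset
open scoped ProbabilityTheory NNReal ENNReal

lemma aux_shift (f : ℕ → ℝ≥0∞) (u : ℕ) :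
    ∑' n, (if u ≤ n then f n else 0) = ∑' t, f (u + t) := by
  have hinj : Function.Injective (fun t => u + t) := fun a b h => by
    simpa using h
  have hr : Set.range (fun t => u + t) = {n : ℕ | u ≤ n} := by
    ext n
    simp only [Set.mem_range, Set.mem_setOf_eq]
    constructor
    · rintro ⟨t, rfl⟩; omega
    · intro h; exact ⟨n - u, by omega⟩
  have h1 := tsum_subtype_eq_of_support_subset
    (f := fun n => if u ≤ n then f n else 0) (s := {n : ℕ | u ≤ n}) ?_
  · rw [← h1]
    have h2 : ∑' (x : {n : ℕ | u ≤ n}), (if u ≤ (x : ℕ) then f x else 0)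
        = ∑' (x : {n : ℕ | u ≤ n}), f x :=
      tsum_congr fun x => if_pos x.2
    rw [h2, ← hr, tsum_range f hinj]
  · intro n hn
    simp only [Function.mem_support] at hn
    by_contra hc
    simp only [Set.mem_setOf_eq] at hc
    exact hn (if_neg hc)

lemma aux_double_count (f : ℕ → ℝ≥0∞) :
    ∑' (u : ℕ), ∑' (t : ℕ), f (u + t) = ∑' (j : ℕ), ((j : ℝ≥0∞) + 1) * f j := by
  have h1 : ∀ u : ℕ, ∑' t, f (u + t) = ∑' n, (if u ≤ n then f n else 0) :=
    fun u => (aux_shift f u).symm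
  simp_rw [h1]
  rw [ENNReal.tsum_comm]
  apply tsum_congr; intro n
  rw [tsum_eq_sum (s := range (n+1))
    (by intro b hb; simp only [mem_range, not_lt] at hb; exact if_neg (by omega))]
  have hc : ∀ u ∈ range (n+1), (if u ≤ n then f n else 0) = f n := by
    intro u hu; simp only [mem_range] at hu; simp [Nat.lt_succ_iff.mp hu]
  rw [Finset.sum_congr rfl hc, Finset.sum_const, card_range, nsmul_eq_mul]
  push_cast
  ring

lemma aux_inner (g : ℕ → ℝ) (n k : ℕ) :
    ∑ u ∈ range (n - k), g u = ∑ u ∈ range (n+1), if k + u < n then g u else 0 := by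
  rw [← Finset.sum_subset (Finset.range_subset_range.mpr (by omega : n - k ≤ n+1)) ?_]
  · apply Finset.sum_congr rfl
    intro u hu; simp only [mem_range] at hu; rw [if_pos (by omega)]
  · intro u h1 h2; simp only [mem_range] at h1 h2; rw [if_neg (by omega)]

lemma aux_swap (f g : ℕ → ℝ) (n : ℕ) :
    ∑ k ∈ range (n+1), f k * ∑ u ∈ range (n-k), g u
      = ∑ u ∈ range (n+1), g u * ∑ k ∈ range (n-u), f k := by
  have h1 : ∀ k, f k * ∑ u ∈ range (n-k), g u
      = ∑ u ∈ range (n+1), (if k + u < n then f k * g u else 0) := by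
    intro k
    rw [aux_inner g n k, Finset.mul_sum]
    apply Finset.sum_congr rfl
    intro u _
    by_cases h : k + u < n
    · rw [if_pos h, if_pos h]
    · rw [if_neg h, if_neg h, mul_zero]
  have h2 : ∀ u, g u * ∑ k ∈ range (n-u), f k
      = ∑ k ∈ range (n+1), (if k + u < n then f k * g u else 0) := by
    intro u
    have h := aux_inner (fun k => f k * g u) n u
    rw [Finset.mul_sum]
    rw [show (∑ k ∈ range (n-u), g u * f k) = ∑ k ∈ range (n-u), f k * g u from
      Finset.sum_congr rfl (fun k _ => mul_comm _ _)]
    rw [h]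
    apply Finset.sum_congr rfl
    intro k _
    by_cases hh : k + u < n
    · rw [if_pos (by omega : u + k < n), if_pos hh]
    · rw [if_neg (by omega : ¬ u + k < n), if_neg hh]
  simp_rw [h1, h2]
  exact Finset.sum_comm

set_option maxHeartbeats 2000000 in
theorem stmt2 {Ω : Type*} [MeasureSpace Ω] [IsProbabilityMeasure (ℙ : Measure Ω)]
    (S X : Ω → ℕ) (hS : Measurable S) (hX : Measurable X)
    (hindep : ProbabilityTheory.IndepFun S X ℙ)
    (s m : ℕ) (hm : 0 < m) (hsm : m ≤ s)
    (hmono₁ : ∀ i j : ℕ, i ≤ j → j ≤ s → ℙ {ω | S ω = i} ≤ ℙ {ω | S ω = j})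
    (hmono₂ : ∀ i j : ℕ, s ≤ i → i ≤ j → ℙ {ω | S ω = j} ≤ ℙ {ω | S ω = i})
    (hskew : ∀ i ∈ Finset.Icc 1 s, ℙ {ω | S ω = s - i} ≤ ℙ {ω | S ω = s + i - 1})
    (hint : Integrable (fun ω => (X ω : ℝ))) (hmean : (∫ ω, (X ω : ℝ)) = m)
    (hL1 : ∃ ℓ ∈ Finset.Icc 1 m,
      (∀ i ∈ Finset.Icc 1 m, i ≤ ℓ →
        0 ≤ (ℙ {ω | X ω ≤ m - i}).toReal - (ℙ {ω | m + i ≤ X ω}).toReal) ∧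
      (∀ i ∈ Finset.Icc 1 m, ℓ < i →
        (ℙ {ω | X ω ≤ m - i}).toReal - (ℙ {ω | m + i ≤ X ω}).toReal ≤ 0)) :
    ℙ {ω | s + m ≤ S ω + X ω} ≤ ℙ {ω | s ≤ S ω} := by
  classical
  have hXset : ∀ k : ℕ, MeasurableSet {ω | X ω = k} :=
    fun k => hX (measurableSet_singleton k)
  have hSset : ∀ n : ℕ, MeasurableSet {ω | n ≤ S ω} :=
    fun n => hS measurableSet_Ici
  -- independence in the form we need
  have hindep' : ∀ (k n : ℕ),
      ℙ ({ω | X ω = k} ∩ {ω | n ≤ S ω}) = ℙ {ω | X ω = k} * ℙ {ω | n ≤ S ω} := by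
    intro k n
    have h := hindep.measure_inter_preimage_eq_mul (Set.Ici n) {k}
      measurableSet_Ici (measurableSet_singleton k)
    rw [Set.inter_comm, mul_comm] at h
    exact h
  -- decomposition of the sum event
  have hdecomp : ℙ {ω | s + m ≤ S ω + X ω}
      = ∑' k, ℙ {ω | X ω = k} * ℙ {ω | s + m - k ≤ S ω} := by
    have hset : {ω | s + m ≤ S ω + X ω}
        = ⋃ k, ({ω | X ω = k} ∩ {ω | s + m - k ≤ S ω}) := by
      ext ω
      simp only [Set.mem_setOf_eq, Set.mem_iUnion, Set.mem_inter_iff]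
      constructor
      · intro h; exact ⟨X ω, rfl, by omega⟩
      · rintro ⟨k, hk, h⟩; omega
    rw [hset, measure_iUnion ?_ (fun k => (hXset k).inter (hSset _))]
    · exact tsum_congr fun k => hindep' k _
    · intro i j hij
      rw [Function.onFun, Set.disjoint_left]
      rintro ω ⟨h1, -⟩ ⟨h2, -⟩
      exact hij (h1.symm.trans h2)
  have htot : ∑' k, ℙ {ω | X ω = k} = 1 := by
    have hset : (Set.univ : Set Ω) = ⋃ k, {ω | X ω = k} := by
      ext ω; simp
    rw [← measure_univ (μ := (ℙ : Measure Ω)), hset,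
      measure_iUnion ?_ (fun k => hXset k)]
    intro i j hij
    rw [Function.onFun, Set.disjoint_left]
    rintro ω h1 h2
    exact hij ((h1 : X ω = i).symm.trans h2)
  -- tail decomposition for X
  have hXtail : ∀ n : ℕ, ℙ {ω | n ≤ X ω} = ∑' t, ℙ {ω | X ω = n + t} := by
    intro n
    have hset : {ω | n ≤ X ω} = ⋃ t, {ω | X ω = n + t} := by
      ext ω
      simp only [Set.mem_setOf_eq, Set.mem_iUnion]
      constructor
      · intro h; exact ⟨X ω - n, by omega⟩
      · rintro ⟨t, ht⟩; omega
    rw [hset, measure_iUnion ?_ (fun t => hXset (n + t))]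
    intro i j hij
    rw [Function.onFun, Set.disjoint_left]
    rintro ω h1 h2
    exact hij (by simp only [Set.mem_setOf_eq] at h1 h2; omega)
  -- finite cumulative for X
  have hXcum : ∀ n : ℕ, ℙ {ω | X ω ≤ n} = ∑ k ∈ range (n+1), ℙ {ω | X ω = k} := by
    intro n
    have hset : {ω | X ω ≤ n} = ⋃ k ∈ range (n+1), {ω | X ω = k} := by
      ext ω
      simp only [Set.mem_setOf_eq, Set.mem_iUnion, mem_range]
      constructor
      · intro h; exact ⟨X ω, by omega, rfl⟩
      · rintro ⟨k, hk, h⟩; omega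
    rw [hset, measure_biUnion_finset ?_ (fun k _ => hXset k)]
    intro i _ j _ hij
    rw [Function.onFun, Set.disjoint_left]
    rintro ω h1 h2
    exact hij (by simp only [Set.mem_setOf_eq] at h1 h2; omega)
  -- real-valued quantities
  set q : ℕ → ℝ := fun k => (ℙ {ω | X ω = k}).toReal with hqdef
  set R : ℕ → ℝ := fun n => (ℙ {ω | n ≤ S ω}).toReal with hRdef
  set p : ℕ → ℝ := fun j => (ℙ {ω | S ω = j}).toReal with hpdef
  have hq0 : ∀ k, 0 ≤ q k := fun k => ENNReal.toReal_nonneg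
  have hp0 : ∀ j, 0 ≤ p j := fun j => ENNReal.toReal_nonneg
  have hR01 : ∀ n, 0 ≤ R n ∧ R n ≤ 1 := by
    intro n
    refine ⟨ENNReal.toReal_nonneg, ?_⟩
    rw [hRdef]
    simp only
    rw [← ENNReal.toReal_one]
    exact ENNReal.toReal_mono ENNReal.one_ne_top prob_le_one
  have hqsum : Summable q := by
    apply ENNReal.summable_toReal
    rw [htot]; exact ENNReal.one_ne_top
  have htotR : ∑' k, q k = 1 := by
    rw [hqdef]
    simp only
    rw [← ENNReal.tsum_toReal_eq (fun k => measure_ne_top _ _), htot, ENNReal.toReal_one]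
  have hLHS : (ℙ {ω | s + m ≤ S ω + X ω}).toReal = ∑' k, q k * R (s + m - k) := by
    rw [hdecomp, ENNReal.tsum_toReal_eq
      (fun k => ENNReal.mul_ne_top (measure_ne_top _ _) (measure_ne_top _ _))]
    exact tsum_congr fun k => ENNReal.toReal_mul
  have hRHS : (ℙ {ω | s ≤ S ω}).toReal = ∑' k, q k * R s := by
    rw [tsum_mul_right, htotR, one_mul]
  have hsum1 : Summable (fun k => q k * R (s + m - k)) := by
    apply Summable.of_nonneg_of_le (fun k => mul_nonneg (hq0 k) (hR01 _).1)
      (fun k => ?_) hqsum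
    calc q k * R (s + m - k) ≤ q k * 1 := by
          exact mul_le_mul_of_nonneg_left (hR01 _).2 (hq0 k)
      _ = q k := mul_one _
  have hsum2 : Summable (fun k => q k * R s) := hqsum.mul_right _
  -- mean of X as a sum
  have hmeanr : ∑' (k : ℕ), (k : ℝ) * q k = m := by
    have hcast : Measurable (fun n : ℕ => (n : ℝ)) := measurable_from_top
    have hmap : ∫ n, (n : ℝ) ∂(Measure.map X ℙ) = ∫ ω, (X ω : ℝ) :=
      integral_map hX.aemeasurable hcast.aestronglyMeasurable
    have hintmap : Integrable (fun n : ℕ => (n : ℝ)) (Measure.map X ℙ) :=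
      (integrable_map_measure hcast.aestronglyMeasurable hX.aemeasurable).mpr hint
    have hcount := integral_countable' hintmap
    have hsing : ∀ k : ℕ, Measure.map X ℙ {k} = ℙ {ω | X ω = k} := by
      intro k
      rw [Measure.map_apply hX (measurableSet_singleton k)]
      rfl
    rw [hmap, hmean] at hcount
    have hgoal : ∑' (k : ℕ), (k : ℝ) * q k
        = ∑' (k : ℕ), ((Measure.map X ℙ) {k}).toReal • (k : ℝ) := by
      apply tsum_congr
      intro k
      simp only [hqdef]
      rw [hsing k, smul_eq_mul, mul_comm]
    rw [hgoal]
    exact hcount.symm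
  -- summability of k * q k
  have hintmapfin : (∫⁻ n, ((n : ℝ≥0∞)) ∂(Measure.map X ℙ)) ≠ ∞ := by
    have hcast : Measurable (fun n : ℕ => (n : ℝ)) := measurable_from_top
    have hintmap : Integrable (fun n : ℕ => (n : ℝ)) (Measure.map X ℙ) :=
      (integrable_map_measure hcast.aestronglyMeasurable hX.aemeasurable).mpr hint
    have h2 : (∫⁻ n, (‖(n : ℝ)‖₊ : ℝ≥0∞) ∂(Measure.map X ℙ)) < ∞ := hintmap.2
    have : ∀ n : ℕ, ((‖(n : ℝ)‖₊ : ℝ≥0∞)) = (n : ℝ≥0∞) := by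
      intro n
      simp [Real.nnnorm_natCast]
    calc (∫⁻ n, ((n : ℝ≥0∞)) ∂(Measure.map X ℙ))
        = ∫⁻ n, (‖(n : ℝ)‖₊ : ℝ≥0∞) ∂(Measure.map X ℙ) := by
          apply lintegral_congr; intro n; rw [this n]
      _ ≠ ∞ := h2.ne
  have hkqfin : ∑' (k : ℕ), (k : ℝ≥0∞) * ℙ {ω | X ω = k} ≠ ∞ := by
    have hsing : ∀ k : ℕ, Measure.map X ℙ {k} = ℙ {ω | X ω = k} := by
      intro k
      rw [Measure.map_apply hX (measurableSet_singleton k)]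
      rfl
    have h := lintegral_countable' (μ := Measure.map X ℙ) (f := fun n : ℕ => (n : ℝ≥0∞))
    have h2 : ∑' (k : ℕ), (k : ℝ≥0∞) * ℙ {ω | X ω = k}
        = ∑' (n : ℕ), (n : ℝ≥0∞) * Measure.map X ℙ {n} :=
      tsum_congr fun k => by rw [hsing k]
    rw [h2]
    intro hcontra
    apply hintmapfin
    rw [h]
    rw [← hcontra]
  have hTsum : Summable (fun k : ℕ => (k : ℝ) * q k) := by
    have h := ENNReal.summable_toReal hkqfin
    apply h.congr
    intro k
    rw [ENNReal.toReal_mul, ENNReal.toReal_natCast]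
  -- step / telescoping for R
  have hstepE : ∀ n : ℕ, ℙ {ω | n ≤ S ω} = ℙ {ω | n+1 ≤ S ω} + ℙ {ω | S ω = n} := by
    intro n
    have hset : {ω | n ≤ S ω} = {ω | n+1 ≤ S ω} ∪ {ω | S ω = n} := by
      ext ω; simp only [Set.mem_setOf_eq, Set.mem_union]; omega
    rw [hset, measure_union ?_ (show MeasurableSet {ω | S ω = n} from hS (measurableSet_singleton n))]
    rw [Set.disjoint_left]
    rintro ω h1 h2
    simp only [Set.mem_setOf_eq] at h1 h2
    omega
  have hstep : ∀ n, R n = R (n+1) + p n := by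
    intro n
    rw [hRdef, hpdef]
    simp only
    rw [hstepE n, ENNReal.toReal_add (measure_ne_top _ _) (measure_ne_top _ _)]
  have htel : ∀ n i : ℕ, R n - R (n + i) = ∑ u ∈ range i, p (n + u) := by
    intro n i
    induction i with
    | zero => simp
    | succ i ih =>
      rw [Finset.sum_range_succ, ← ih]
      have h1 := hstep (n + i)
      have h2 : n + (i+1) = (n + i) + 1 := by omega
      rw [h2]
      linarith
  -- F, G, alpha
  set F : ℕ → ℝ := fun u => ∑ k ∈ range (m - u), q k with hFdef
  set G : ℕ → ℝ := fun u => (ℙ {ω | m + 1 + u ≤ X ω}).toReal with hGdef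
  have hG0 : ∀ u, 0 ≤ G u := fun u => ENNReal.toReal_nonneg
  set α : ℕ → ℝ := fun u => (if u < m then F u else 0) - G u with hαdef
  obtain ⟨ℓ, hℓmem, hα₁, hα₂⟩ := hL1
  simp only [Finset.mem_Icc] at hℓmem
  -- skew: b ≤ a
  have hba : ∀ u, u < s → p (s - 1 - u) ≤ p (s + u) := by
    intro u hu
    have h := hskew (u+1) (by simp only [Finset.mem_Icc]; omega)
    have e1 : s - (u+1) = s - 1 - u := by omega
    have e2 : s + (u+1) - 1 = s + u := by omega
    rw [e1, e2] at h
    exact ENNReal.toReal_mono (measure_ne_top _ _) h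
  have hamono : ∀ u v : ℕ, u ≤ v → p (s + v) ≤ p (s + u) :=
    fun u v huv => ENNReal.toReal_mono (measure_ne_top _ _)
      (hmono₂ (s+u) (s+v) (by omega) (by omega))
  -- difference identity, small k
  have hdle : ∀ k, k ≤ m → R s - R (s + m - k) = ∑ u ∈ range (m - k), p (s + u) := by
    intro k hk
    have e : s + m - k = s + (m - k) := by omega
    rw [e, htel s (m - k)]
  -- difference identity, large k
  have hdge : ∀ t : ℕ, R s - R (s + m - (t + (m+1)))
      = - ∑ u ∈ range s, (if u ≤ t then p (s - 1 - u) else 0) := by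
    intro t
    have e : s + m - (t + (m+1)) = s - (t+1) := by omega
    rw [e]
    have hmin : (s - (t+1)) + min (t+1) s = s := by omega
    have h3 := htel (s - (t+1)) (min (t+1) s)
    rw [hmin] at h3
    have h4 : ∑ u ∈ range s, (if u ≤ t then p (s - 1 - u) else 0)
        = ∑ u ∈ range (min (t+1) s), p (s - 1 - u) := by
      rw [← Finset.sum_subset (Finset.range_subset_range.mpr (by omega : min (t+1) s ≤ s)) ?_]
      · apply Finset.sum_congr rfl
        intro u hu; simp only [mem_range] at hu; rw [if_pos (by omega)]
      · intro u h1 h2; simp only [mem_range] at h1 h2; rw [if_neg (by omega)]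
    have h5' := Finset.sum_range_reflect (fun u => p ((s - (t+1)) + u)) (min (t+1) s)
    have h5 : ∑ u ∈ range (min (t+1) s), p (s - 1 - u)
        = ∑ u ∈ range (min (t+1) s), p ((s - (t+1)) + u) := by
      rw [← h5']
      apply Finset.sum_congr rfl
      intro u hu
      simp only [mem_range] at hu
      congr 1
      omega
    rw [h4, h5, ← h3]
    ring
  -- summability of main series
  have hDsummand : (fun k => q k * (R s - R (s + m - k)))
      = fun k => q k * R s - q k * R (s + m - k) := by
    funext k; ring
  have hDsum : Summable (fun k => q k * (R s - R (s + m - k))) := by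
    rw [hDsummand]; exact hsum2.sub hsum1
  have hsplit := Summable.sum_add_tsum_nat_add (m+1) hDsum
  -- T1 computation
  have hT1 : ∑ k ∈ range (m+1), q k * (R s - R (s + m - k))
      = ∑ u ∈ range (m+1), p (s + u) * F u := by
    have h1 : ∀ k ∈ range (m+1), q k * (R s - R (s + m - k))
        = q k * ∑ u ∈ range (m - k), p (s + u) := by
      intro k hk; simp only [mem_range] at hk; rw [hdle k (by omega)]
    rw [Finset.sum_congr rfl h1, aux_swap q (fun u => p (s + u)) m]
  -- G facts
  have hGtsum : ∀ u : ℕ, G u = ∑' t, q (m + 1 + u + t) := by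
    intro u
    rw [hGdef]; simp only
    rw [hXtail (m + 1 + u), ENNReal.tsum_toReal_eq (fun t => measure_ne_top _ _)]
  have hqshift : ∀ c : ℕ, Summable (fun t => q (t + c)) :=
    fun c => (summable_nat_add_iff c).mpr hqsum
  have hGite : ∀ u : ℕ, ∑' t, (if u ≤ t then q (t + (m+1)) else 0) = G u := by
    intro u
    have hsummable : Summable (fun t => if u ≤ t then q (t + (m+1)) else 0) := by
      apply Summable.of_nonneg_of_le ?_ ?_ (hqshift (m+1))
      · intro t; by_cases h : u ≤ t
        · rw [if_pos h]; exact hq0 _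
        · rw [if_neg h]
      · intro t; by_cases h : u ≤ t
        · rw [if_pos h]
        · rw [if_neg h]; exact hq0 _
    have hsp := Summable.sum_add_tsum_nat_add u hsummable
    have hzero : ∑ i ∈ range u, (if u ≤ i then q (i + (m+1)) else 0) = 0 :=
      Finset.sum_eq_zero fun i hi => if_neg (by simp only [mem_range] at hi; omega)
    rw [hzero, zero_add] at hsp
    rw [← hsp]
    rw [hGtsum u]
    apply tsum_congr
    intro t
    rw [if_pos (by omega : u ≤ t + u)]
    congr 1
    omega
  -- T2 computation
  have hT2 : ∑' t, q (t + (m+1)) * (R s - R (s + m - (t + (m+1))))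
      = - ∑ u ∈ range s, p (s - 1 - u) * G u := by
    have h1 : ∀ t : ℕ, q (t + (m+1)) * (R s - R (s + m - (t + (m+1))))
        = - ∑ u ∈ range s, (if u ≤ t then q (t + (m+1)) * p (s - 1 - u) else 0) := by
      intro t
      rw [hdge t, mul_neg, Finset.mul_sum]
      congr 1
      apply Finset.sum_congr rfl
      intro u _
      by_cases h : u ≤ t
      · rw [if_pos h, if_pos h]
      · rw [if_neg h, if_neg h, mul_zero]
    rw [tsum_congr h1, tsum_neg]
    congr 1
    have hsummand : ∀ u ∈ range s,
        Summable (fun t => if u ≤ t then q (t + (m+1)) * p (s - 1 - u) else 0) := by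
      intro u _
      apply Summable.of_nonneg_of_le ?_ ?_ ((hqshift (m+1)).mul_right (p (s-1-u)))
      · intro t; by_cases h : u ≤ t
        · rw [if_pos h]; exact mul_nonneg (hq0 _) (hp0 _)
        · rw [if_neg h]
      · intro t; by_cases h : u ≤ t
        · rw [if_pos h]
        · rw [if_neg h]; exact mul_nonneg (hq0 _) (hp0 _)
    rw [Summable.tsum_finsetSum hsummand]
    apply Finset.sum_congr rfl
    intro u hu
    have hfact : (fun t => if u ≤ t then q (t + (m+1)) * p (s - 1 - u) else 0)
        = fun t => (if u ≤ t then q (t + (m+1)) else 0) * p (s - 1 - u) := by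
      funext t; by_cases h : u ≤ t
      · rw [if_pos h, if_pos h]
      · rw [if_neg h, if_neg h, zero_mul]
    rw [hfact, tsum_mul_right, hGite u, mul_comm]
  -- cumulative link for F
  have hFeq : ∀ u, u < m → F u = (ℙ {ω | X ω ≤ m - (u+1)}).toReal := by
    intro u hu
    rw [hFdef]; simp only
    rw [hXcum (m - (u+1)), ENNReal.toReal_sum (fun k _ => measure_ne_top _ _)]
    have e : m - (u+1) + 1 = m - u := by omega
    rw [e]
  have hGeq : ∀ u : ℕ, G u = (ℙ {ω | m + (u+1) ≤ X ω}).toReal := by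
    intro u
    rw [hGdef]; simp only
    have e : m + 1 + u = m + (u+1) := by omega
    rw [e]
  -- sign conditions
  have hαpos : ∀ u, u + 1 ≤ ℓ → 0 ≤ α u := by
    intro u hu
    have hum : u < m := by omega
    rw [hαdef]; simp only [if_pos hum]
    have h := hα₁ (u+1) (by simp only [Finset.mem_Icc]; omega) hu
    rw [hFeq u hum, hGeq u]
    linarith
  have hαneg : ∀ u, ℓ ≤ u → α u ≤ 0 := by
    intro u hu
    rw [hαdef]; simp only
    by_cases hum : u < m
    · rw [if_pos hum]
      have h := hα₂ (u+1) (by simp only [Finset.mem_Icc]; omega) (by omega)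
      rw [hFeq u hum, hGeq u]
      linarith
    · rw [if_neg hum]
      have := hG0 u
      linarith
  -- Chebyshev-type comparison
  have hcheb : ∀ u ∈ range s, p (s + (ℓ-1)) * α u ≤ p (s + u) * α u := by
    intro u _
    by_cases h : u + 1 ≤ ℓ
    · exact mul_le_mul_of_nonneg_right (hamono u (ℓ-1) (by omega)) (hαpos u h)
    · exact mul_le_mul_of_nonpos_right (hamono (ℓ-1) u (by omega)) (hαneg u (by omega))
  -- total sum of alpha is nonnegative
  have hFm : F m = 0 := by
    rw [hFdef]; simp
  have hS1 : ∑ u ∈ range m, F u = ∑ k ∈ range (m+1), q k * ((m:ℝ) - k) := by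
    have h := aux_swap q (fun _ => (1:ℝ)) m
    have hrhs : ∑ u ∈ range (m+1), (1:ℝ) * ∑ k ∈ range (m-u), q k
        = ∑ u ∈ range m, F u := by
      rw [Finset.sum_range_succ]
      simp only [one_mul, Nat.sub_self, Finset.range_zero, Finset.sum_empty, add_zero]
      rfl
    have hlhs : ∑ k ∈ range (m+1), q k * ∑ u ∈ range (m-k), (1:ℝ)
        = ∑ k ∈ range (m+1), q k * ((m:ℝ) - k) := by
      apply Finset.sum_congr rfl
      intro k hk
      simp only [mem_range] at hk
      rw [Finset.sum_const, card_range, nsmul_eq_mul, mul_one]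
      congr 1
      rw [Nat.cast_sub (by omega : k ≤ m)]
    rw [← hrhs, ← hlhs, h]
  -- the ENNReal tail computation for sum of G
  have hS2E : ∑' (u : ℕ), ℙ {ω | m + 1 + u ≤ X ω}
      = ∑' (j : ℕ), ((j:ℝ≥0∞) + 1) * ℙ {ω | X ω = m + 1 + j} := by
    have h1 : ∀ u : ℕ, ℙ {ω | m + 1 + u ≤ X ω}
        = ∑' t, (fun j => ℙ {ω | X ω = m + 1 + j}) (u + t) := by
      intro u
      rw [hXtail (m + 1 + u)]
      apply tsum_congr
      intro t
      simp only
      have e : m + 1 + u + t = m + 1 + (u + t) := by omega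
      rw [e]
    calc ∑' u, ℙ {ω | m + 1 + u ≤ X ω}
        = ∑' (u : ℕ), ∑' (t : ℕ), (fun j => ℙ {ω | X ω = m + 1 + j}) (u + t) :=
          tsum_congr h1
      _ = ∑' (j : ℕ), ((j:ℝ≥0∞) + 1) * ℙ {ω | X ω = m + 1 + j} :=
          aux_double_count (fun j => ℙ {ω | X ω = m + 1 + j})
  have hS2fin : ∑' (u : ℕ), ℙ {ω | m + 1 + u ≤ X ω} ≠ ∞ := by
    rw [hS2E]
    have hb : ∀ j : ℕ, ((j:ℝ≥0∞)+1) * ℙ {ω | X ω = m+1+j}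
        ≤ (fun k : ℕ => (k:ℝ≥0∞) * ℙ {ω | X ω = k}) (m+1+j) := by
      intro j
      show ((j:ℝ≥0∞)+1) * ℙ {ω | X ω = m+1+j} ≤ ((m+1+j : ℕ) : ℝ≥0∞) * ℙ {ω | X ω = m+1+j}
      have hc : ((j:ℝ≥0∞)+1) ≤ ((m+1+j : ℕ) : ℝ≥0∞) := by
        have h1 : ((j+1 : ℕ) : ℝ≥0∞) ≤ ((m+1+j : ℕ) : ℝ≥0∞) := by
          exact_mod_cast (by omega : j + 1 ≤ m + 1 + j)
        calc ((j:ℝ≥0∞)+1) = ((j+1 : ℕ) : ℝ≥0∞) := by push_cast; ring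
          _ ≤ _ := h1
      exact mul_le_mul' hc le_rfl
    have hcomp : ∑' (j : ℕ), ((j:ℝ≥0∞)+1) * ℙ {ω | X ω = m+1+j}
        ≤ ∑' (k : ℕ), (k : ℝ≥0∞) * ℙ {ω | X ω = k} := by
      calc ∑' (j : ℕ), ((j:ℝ≥0∞)+1) * ℙ {ω | X ω = m+1+j}
          ≤ ∑' (j : ℕ), (fun k : ℕ => (k:ℝ≥0∞) * ℙ {ω | X ω = k}) (m+1+j) :=
            ENNReal.tsum_le_tsum hb
        _ ≤ ∑' (k : ℕ), (k : ℝ≥0∞) * ℙ {ω | X ω = k} :=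
            ENNReal.tsum_comp_le_tsum_of_injective (fun a b hab => Nat.add_left_cancel hab) _
    exact ne_top_of_le_ne_top hkqfin hcomp
  have hGsummable : Summable G := by
    have h := ENNReal.summable_toReal hS2fin
    exact h
  have hfin2 : ∑' (j : ℕ), ((j:ℝ≥0∞)+1) * ℙ {ω | X ω = m+1+j} ≠ ∞ := by
    rw [← hS2E]; exact hS2fin
  have hGtsumval : ∑' u, G u = ∑' (j:ℕ), ((j:ℝ)+1) * q (m+1+j) := by
    rw [hGdef]; simp only
    rw [← ENNReal.tsum_toReal_eq (fun u => measure_ne_top _ _), hS2E,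
      ENNReal.tsum_toReal_eq (fun j => ENNReal.mul_ne_top
        (by simp [ENNReal.add_ne_top]) (measure_ne_top _ _))]
    apply tsum_congr
    intro j
    rw [ENNReal.toReal_mul]
    congr 1 <;> simp
  have hGsumbound : ∑ u ∈ range s, G u ≤ ∑' u, G u :=
    Summable.sum_le_tsum (range s) (fun u _ => hG0 u) hGsummable
  have hsumS2 : Summable (fun j : ℕ => ((j:ℝ)+1) * q (m+1+j)) := by
    have h := ENNReal.summable_toReal hfin2
    apply h.congr
    intro j
    rw [ENNReal.toReal_mul]
    congr 1 <;> simp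
  -- balance identity
  have htail1 := Summable.sum_add_tsum_nat_add (m+1) hqsum
  have htail2 := Summable.sum_add_tsum_nat_add (m+1) hTsum
  have hidx : ∑' (j:ℕ), ((j:ℝ)+1) * q (m+1+j) = ∑' (j:ℕ), ((j:ℝ)+1) * q (j+(m+1)) := by
    apply tsum_congr; intro j
    have e : m+1+j = j+(m+1) := by omega
    rw [e]
  have hq2 : Summable (fun j => q (j+(m+1))) := hqshift (m+1)
  have hT2s : Summable (fun j : ℕ => ((j+(m+1) : ℕ):ℝ) * q (j+(m+1))) :=
    (summable_nat_add_iff (m+1)).mpr hTsum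
  have hsplitsum : ∑' (j:ℕ), ((j:ℝ)+1) * q (j+(m+1))
      = (∑' (j:ℕ), ((j+(m+1) : ℕ):ℝ) * q (j+(m+1))) - (m:ℝ) * ∑' (j:ℕ), q (j+(m+1)) := by
    rw [← tsum_mul_left, ← Summable.tsum_sub hT2s ((hq2).mul_left (m:ℝ))]
    apply tsum_congr
    intro j
    push_cast
    ring
  have hαtotsum : 0 ≤ ∑ u ∈ range s, α u := by
    have h1 : ∑ u ∈ range s, α u
        = ∑ u ∈ range m, F u - ∑ u ∈ range s, G u := by
      rw [hαdef]
      simp only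
      rw [Finset.sum_sub_distrib]
      congr 1
      have h2 : ∑ u ∈ range m, (if u < m then F u else 0)
          = ∑ u ∈ range s, (if u < m then F u else 0) :=
        Finset.sum_subset (Finset.range_subset_range.mpr hsm)
          (fun u h1 h2 => if_neg (by simp only [mem_range] at h1 h2; omega))
      rw [← h2]
      exact Finset.sum_congr rfl fun u hu =>
        if_pos (by simpa using hu)
    have hS1' : ∑ k ∈ range (m+1), q k * ((m:ℝ) - k)
        = (m:ℝ) * (∑ k ∈ range (m+1), q k) - ∑ k ∈ range (m+1), (k:ℝ) * q k := by
      rw [Finset.mul_sum, ← Finset.sum_sub_distrib]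
      apply Finset.sum_congr rfl
      intro k _
      ring
    -- htail1 : ∑_{range (m+1)} q + ∑' q (j+(m+1)) = 1
    rw [htotR] at htail1
    rw [hmeanr] at htail2
    have hbalance : ∑' (j:ℕ), ((j:ℝ)+1) * q (j+(m+1)) = ∑ u ∈ range m, F u := by
      rw [hsplitsum, hS1, hS1']
      have e1 : ∑' (j:ℕ), ((j+(m+1) : ℕ):ℝ) * q (j+(m+1))
          = (m:ℝ) - ∑ k ∈ range (m+1), (k:ℝ) * q k := by
        linarith [htail2]
      have e2 : ∑' (j:ℕ), q (j+(m+1)) = 1 - ∑ k ∈ range (m+1), q k := by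
        linarith [htail1]
      rw [e1, e2]
      ring
    have hfinal : ∑ u ∈ range s, G u ≤ ∑ u ∈ range m, F u := by
      calc ∑ u ∈ range s, G u ≤ ∑' u, G u := hGsumbound
        _ = ∑' (j:ℕ), ((j:ℝ)+1) * q (m+1+j) := hGtsumval
        _ = ∑' (j:ℕ), ((j:ℝ)+1) * q (j+(m+1)) := hidx
        _ = ∑ u ∈ range m, F u := hbalance
    linarith [h1, hfinal]
  -- main positivity
  have key : 0 ≤ ∑' k, q k * (R s - R (s + m - k)) := by
    rw [← hsplit]
    have hT2' : ∑' (i:ℕ), (fun k => q k * (R s - R (s + m - k))) (i + (m+1))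
        = - ∑ u ∈ range s, p (s - 1 - u) * G u := hT2
    rw [hT1, hT2']
    have c1 : ∑ u ∈ range s, p (s-1-u) * G u ≤ ∑ u ∈ range s, p (s+u) * G u :=
      Finset.sum_le_sum fun u hu =>
        mul_le_mul_of_nonneg_right (hba u (by simpa using hu)) (hG0 u)
    have c2 : ∑ u ∈ range (m+1), p (s+u) * F u - ∑ u ∈ range s, p (s+u) * G u
        = ∑ u ∈ range s, p (s+u) * α u := by
      rw [hαdef]
      simp only [mul_sub]
      rw [Finset.sum_sub_distrib]
      congr 1
      have h2 : ∑ u ∈ range (m+1), p (s+u) * F u = ∑ u ∈ range m, p (s+u) * F u := by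
        rw [Finset.sum_range_succ, hFm, mul_zero, add_zero]
      rw [h2]
      have h3 : ∑ u ∈ range m, p (s+u) * F u
          = ∑ u ∈ range m, p (s+u) * (if u < m then F u else 0) :=
        Finset.sum_congr rfl fun u hu => by
          rw [if_pos (by simp only [mem_range] at hu; exact hu)]
      rw [h3]
      exact Finset.sum_subset (Finset.range_subset_range.mpr hsm)
        (fun u h1 h2 => by
          rw [if_neg (by simp only [mem_range] at h1 h2; omega), mul_zero])
    have c3 : ∑ u ∈ range s, p (s + (ℓ-1)) * α u ≤ ∑ u ∈ range s, p (s+u) * α u :=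
      Finset.sum_le_sum hcheb
    have c4 : 0 ≤ p (s + (ℓ-1)) * ∑ u ∈ range s, α u :=
      mul_nonneg (hp0 _) hαtotsum
    rw [Finset.mul_sum] at c4
    linarith
  -- conclusion
  rw [← ENNReal.toReal_le_toReal (measure_ne_top _ _) (measure_ne_top _ _)]
  rw [hLHS, hRHS, ← sub_nonneg, ← Summable.tsum_sub hsum2 hsum1]
  calc (0:ℝ) ≤ ∑' k, q k * (R s - R (s + m - k)) := key
    _ = ∑' k, (q k * R s - q k * R (s + m - k)) := by
        apply tsum_congr; intro k; ring
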